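/- Let X be a finite abelian group and ξ_1,…,ξ_n (n ≥ 2) independent X-valued random variables with distributions μ_1,…,μ_n. Let α_{ij} ∈ Aut(X) for i,j = 1,…,n. If the n linear forms L_j = Σ_{i=1}^n α_{ij} ξ_i, j = 1,…,n, are independent, then each μ_i is an idempotent distribution, i.e., μ_i = m_{K_i} * E_{x_i} for some subgroup K_i of X and some x_i ∈ X. -/

import Mathlib

set_option linter.unusedSectionVars false
set_option maxHeartbeats 1000000


/-- A probability distribution on a finite set, given by its mass function. -/
def IsDist {X : Type*} [Fintype X] (μ : X → ℝ) : Prop :=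
  (∀ x, 0 ≤ μ x) ∧ ∑ x, μ x = 1

/-- The characteristic function `μ̂(y) = ∑_x (x,y) μ({x})` of a distribution `μ`
on a finite abelian group `X`, where `y` is a character of `X`. -/
noncomputable def charFun {X : Type*} [AddCommGroup X] [Fintype X]
    (μ : X → ℝ) (y : AddChar X ℂ) : ℂ :=
  ∑ x, (μ x : ℂ) * y x

/-- The Haar (uniform) distribution `m_K` on a subgroup `K` of `X`. -/
noncomputable def haarDist {X : Type*} [AddCommGroup X] [Fintype X]
    (K : AddSubgroup X) : X → ℝ :=
  (K : Set X).indicator fun _ => ((Nat.card K : ℝ))⁻¹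

/-- The degenerate distribution `E_{x₀}` concentrated at `x₀`. -/
def diracDist {X : Type*} [DecidableEq X] (x₀ : X) : X → ℝ :=
  fun x => if x = x₀ then 1 else 0

/-- Convolution of two distributions on a finite abelian group. -/
noncomputable def convDist {X : Type*} [AddCommGroup X] [Fintype X]
    (μ ν : X → ℝ) : X → ℝ :=
  fun x => ∑ t, μ t * ν (x - t)

/-- `μ` is an idempotent distribution: a shift of the Haar distribution on a subgroup. -/
noncomputable def IsIdempotent {X : Type*} [AddCommGroup X] [Fintype X] [DecidableEq X]
    (μ : X → ℝ) : Prop :=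
  ∃ (K : AddSubgroup X) (x₀ : X), μ = convDist (haarDist K) (diracDist x₀)

/-- The linear forms `L_j = ∑_i A i j (ξ i)`, `j = 1,…,k`, of independent random
variables `ξ i` with distributions `μ i` are independent: the joint distribution of
`(L_1, …, L_k)` equals the product of the marginal distributions. -/
def FormsIndep {X : Type*} [AddCommGroup X] [Fintype X] [DecidableEq X] {n k : ℕ}
    (μ : Fin n → X → ℝ) (A : Fin n → Fin k → X → X) : Prop :=
  ∀ x : Fin k → X,
    (∑ t : Fin n → X, if (∀ j, ∑ i, A i j (t i) = x j) then ∏ i, μ i (t i) else 0) =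
    ∏ j, ∑ t : Fin n → X, if (∑ i, A i j (t i) = x j) then ∏ i, μ i (t i) else 0

/-- The adjoint `α̃` of an endomorphism `α` of `X`, acting on the character group:
`(α x, y) = (x, α̃ y)`. -/
noncomputable def adjChar {X : Type*} [AddCommGroup X] (α : X →+ X)
    (y : AddChar X ℂ) : AddChar X ℂ :=
  y.compAddMonoidHom α

namespace Stmt11Aux

variable {X : Type*} [AddCommGroup X] [Fintype X] [DecidableEq X] {n : ℕ}

noncomputable def formD (μ : Fin n → X → ℝ) (α : Fin n → Fin n → X ≃+ X) (j : Fin n) (s : X) : ℝ :=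
  ∑ t : Fin n → X, if (∑ i, α i j (t i)) = s then ∏ i, μ i (t i) else 0

noncomputable def restD (μ : Fin n → X → ℝ) (α : Fin n → Fin n → X ≃+ X) (i j : Fin n) (b : X) : ℝ :=
  ∑ t : Fin n → X, if (∑ i', if i' = i then 0 else α i' j (t i')) = b then
      (∏ i', if i' = i then (if t i' = 0 then (1:ℝ) else 0) else μ i' (t i')) else 0

variable {μ : Fin n → X → ℝ} {α : Fin n → Fin n → X ≃+ X}

lemma sum_update (i j : Fin n) (t : Fin n → X) (a : X) :
    ∑ i', α i' j (Function.update t i a i')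
      = α i j a + ∑ i' ∈ Finset.univ.erase i, α i' j (t i') := by
  rw [← Finset.add_sum_erase _ (fun i' => α i' j (Function.update t i a i')) (Finset.mem_univ i)]
  congr 1
  · rw [Function.update_self]
  · exact Finset.sum_congr rfl fun i' hi' => by
      rw [Function.update_of_ne (Finset.ne_of_mem_erase hi')]

lemma S_eq (i j : Fin n) (t : Fin n → X) :
    (∑ i', if i' = i then 0 else α i' j (t i'))
      = ∑ i' ∈ Finset.univ.erase i, α i' j (t i') := by
  rw [← Finset.add_sum_erase _ (fun i' => if i' = i then 0 else α i' j (t i')) (Finset.mem_univ i),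
    if_pos rfl, zero_add]
  exact Finset.sum_congr rfl fun i' hi' => by rw [if_neg (Finset.ne_of_mem_erase hi')]

lemma prod_update (i : Fin n) (t : Fin n → X) (a : X) :
    ∏ i', μ i' (Function.update t i a i')
      = μ i a * ∏ i' ∈ Finset.univ.erase i, μ i' (t i') := by
  rw [← Finset.mul_prod_erase _ (fun i' => μ i' (Function.update t i a i')) (Finset.mem_univ i)]
  congr 1
  · rw [Function.update_self]
  · exact Finset.prod_congr rfl fun i' hi' => by
      rw [Function.update_of_ne (Finset.ne_of_mem_erase hi')]

lemma W_eq (i : Fin n) (t : Fin n → X) :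
    (∏ i', if i' = i then (if t i' = 0 then (1:ℝ) else 0) else μ i' (t i'))
      = (if t i = 0 then (1:ℝ) else 0) * ∏ i' ∈ Finset.univ.erase i, μ i' (t i') := by
  rw [← Finset.mul_prod_erase _
    (fun i' => if i' = i then (if t i' = 0 then (1:ℝ) else 0) else μ i' (t i'))
    (Finset.mem_univ i), if_pos rfl]
  congr 1
  exact Finset.prod_congr rfl fun i' hi' => by rw [if_neg (Finset.ne_of_mem_erase hi')]

def updEquiv (i : Fin n) : ((Fin n → X) × X) ≃ ((Fin n → X) × X) where
  toFun p := (Function.update p.1 i p.2, p.1 i)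
  invFun p := (Function.update p.1 i p.2, p.1 i)
  left_inv p := by
    obtain ⟨t, a⟩ := p
    simp [Function.update_idem, Function.update_self, Function.update_eq_self]
  right_inv p := by
    obtain ⟨t, a⟩ := p
    simp [Function.update_idem, Function.update_self, Function.update_eq_self]

lemma formD_conv (i j : Fin n) (s : X) :
    formD μ α j s = ∑ b, restD μ α i j b * μ i ((α i j).symm (s - b)) := by
  have step1 : ∀ b, restD μ α i j b * μ i ((α i j).symm (s - b))
      = ∑ t : Fin n → X, if (∑ i', if i' = i then 0 else α i' j (t i')) = b then
          (∏ i', if i' = i then (if t i' = 0 then (1:ℝ) else 0) else μ i' (t i'))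
            * μ i ((α i j).symm (s - b)) else 0 := by
    intro b
    rw [restD, Finset.sum_mul]
    exact Finset.sum_congr rfl fun t _ => by split <;> simp
  rw [Finset.sum_congr rfl fun b _ => step1 b, Finset.sum_comm]
  simp only [Finset.sum_ite_eq, Finset.mem_univ, if_true]
  -- goal : formD μ α j s = ∑ t, W t * μ i (σ (s - S t))
  have step2 : ∀ (t : Fin n → X),
      (∏ i', if i' = i then (if t i' = 0 then (1:ℝ) else 0) else μ i' (t i'))
        * μ i ((α i j).symm (s - ∑ i', if i' = i then 0 else α i' j (t i')))
      = ∑ a : X, if a = (α i j).symm (s - ∑ i', if i' = i then 0 else α i' j (t i')) then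
          (∏ i', if i' = i then (if t i' = 0 then (1:ℝ) else 0) else μ i' (t i')) * μ i a
        else 0 := by
    intro t
    rw [Finset.sum_ite_eq']
    simp
  rw [Finset.sum_congr rfl fun t _ => step2 t, ← Fintype.sum_prod_type']
  have step3 : ∀ (p : (Fin n → X) × X),
      (if p.2 = (α i j).symm (s - ∑ i', if i' = i then 0 else α i' j (p.1 i')) then
          (∏ i', if i' = i then (if p.1 i' = 0 then (1:ℝ) else 0) else μ i' (p.1 i')) * μ i p.2
        else 0)
      = (fun q : (Fin n → X) × X => if q.2 = 0 then
          (if (∑ i', α i' j (q.1 i')) = s then ∏ i', μ i' (q.1 i') else 0) else 0)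
        (updEquiv i p) := by
    intro ⟨t, a⟩
    show _ = if t i = 0 then
        (if (∑ i', α i' j (Function.update t i a i')) = s
          then ∏ i', μ i' (Function.update t i a i') else 0) else 0
    rw [sum_update, prod_update, W_eq, S_eq]
    have hcond : (a = (α i j).symm (s - ∑ i' ∈ Finset.univ.erase i, α i' j (t i')))
        ↔ (α i j a + ∑ i' ∈ Finset.univ.erase i, α i' j (t i') = s) := by
      constructor
      · rintro rfl
        rw [AddEquiv.apply_symm_apply]
        abel
      · intro h
        rw [eq_comm, AddEquiv.symm_apply_eq, ← h]
        abel
    rw [if_congr hcond rfl rfl]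
    split_ifs <;> ring
  rw [Finset.sum_congr rfl fun p _ => step3 p, Equiv.sum_comp (updEquiv i)
    (fun q : (Fin n → X) × X => if q.2 = 0 then
      (if (∑ i', α i' j (q.1 i')) = s then ∏ i', μ i' (q.1 i') else 0) else 0)]
  simp only [Fintype.sum_prod_type]
  rw [formD]
  apply Finset.sum_congr rfl
  intro t _
  rw [Finset.sum_ite_eq']
  simp

lemma restD_nonneg (hμ : ∀ i, IsDist (μ i)) (i j : Fin n) (b : X) : 0 ≤ restD μ α i j b := by
  apply Finset.sum_nonneg
  intro t _
  split
  · apply Finset.prod_nonneg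
    intro i' _
    split
    · split <;> norm_num
    · exact (hμ i').1 _
  · exact le_rfl

lemma restD_sum_one (hμ : ∀ i, IsDist (μ i)) (i j : Fin n) : ∑ b, restD μ α i j b = 1 := by
  unfold restD
  rw [Finset.sum_comm]
  simp only [Finset.sum_ite_eq, Finset.mem_univ, if_true]
  have h := Fintype.prod_sum (f := fun (i' : Fin n) (x : X) =>
    if i' = i then (if x = (0:X) then (1:ℝ) else 0) else μ i' x)
  rw [← h]
  apply Finset.prod_eq_one
  intro i' _
  by_cases hii : i' = i
  · simp [hii]
  · simp [hii, (hμ i').2]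

lemma var_id {β : Type*} [Fintype β] (q x : β → ℝ) (hq1 : ∑ b, q b = 1) :
    ∑ b, ∑ b', q b * q b' * (x b - x b')^2
      = 2 * (∑ b, q b * (x b)^2) - 2 * (∑ b, q b * x b)^2 := by
  have inner : ∀ b, ∑ b', q b * q b' * (x b - x b')^2
      = (q b * (x b)^2) - (2 * (q b * x b)) * (∑ b', q b' * x b')
        + q b * (∑ b', q b' * (x b')^2) := by
    intro b
    have e : ∀ b', q b * q b' * (x b - x b')^2
        = ((q b * (x b)^2) * q b' - (2 * (q b * x b)) * (q b' * x b'))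
          + q b * (q b' * (x b')^2) := fun b' => by ring
    rw [Finset.sum_congr rfl (fun b' _ => e b'), Finset.sum_add_distrib,
      Finset.sum_sub_distrib]
    simp only [← Finset.mul_sum]
    rw [hq1, mul_one]
  rw [Finset.sum_congr rfl (fun b _ => inner b), Finset.sum_add_distrib,
    Finset.sum_sub_distrib, ← Finset.sum_mul, ← Finset.sum_mul, hq1, one_mul]
  simp only [← Finset.mul_sum]
  ring

lemma shift_sq_sum (i j : Fin n) (b : X) :
    ∑ s, (μ i ((α i j).symm (s - b)))^2 = ∑ x, (μ i x)^2 := by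
  apply Fintype.sum_bijective (fun s : X => (α i j).symm (s - b))
    (((α i j).symm.bijective).comp (Equiv.subRight b).bijective)
  intro s
  rfl

lemma key_eq (hμ : ∀ i, IsDist (μ i)) (i j : Fin n) :
    ∑ s, (formD μ α j s)^2
      = (∑ x, (μ i x)^2)
        - (1/2) * ∑ s, ∑ b, ∑ b', restD μ α i j b * restD μ α i j b'
            * (μ i ((α i j).symm (s-b)) - μ i ((α i j).symm (s-b')))^2 := by
  have h1 : ∀ s, (formD μ α j s)^2
      = (∑ b, restD μ α i j b * (μ i ((α i j).symm (s - b)))^2)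
        - (1/2) * (∑ b, ∑ b', restD μ α i j b * restD μ α i j b'
            * (μ i ((α i j).symm (s-b)) - μ i ((α i j).symm (s-b')))^2) := by
    intro s
    have hv := var_id (q := restD μ α i j) (x := fun b => μ i ((α i j).symm (s - b)))
      (restD_sum_one hμ i j)
    rw [formD_conv i j s]
    try simp only [] at hv ⊢
    linarith [hv]
  rw [Finset.sum_congr rfl fun s _ => h1 s, Finset.sum_sub_distrib, ← Finset.mul_sum]
  congr 1
  rw [Finset.sum_comm]
  have h2 : ∀ b, ∑ s, restD μ α i j b * (μ i ((α i j).symm (s - b)))^2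
      = restD μ α i j b * ∑ x, (μ i x)^2 := by
    intro b
    rw [← Finset.mul_sum, shift_sq_sum]
  rw [Finset.sum_congr rfl fun b _ => h2 b, ← Finset.sum_mul, restD_sum_one hμ i j, one_mul]


lemma sum_sq_le_sq_sum {β : Type*} (s : Finset β) (f : β → ℝ) (h : ∀ b ∈ s, 0 ≤ f b) :
    ∑ b ∈ s, (f b)^2 ≤ (∑ b ∈ s, f b)^2 := by
  have h1 : ∀ b ∈ s, (f b)^2 ≤ f b * ∑ b ∈ s, f b := by
    intro b hb
    rw [sq]
    exact mul_le_mul_of_nonneg_left (Finset.single_le_sum h hb) (h b hb)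
  calc ∑ b ∈ s, (f b)^2 ≤ ∑ b ∈ s, f b * ∑ b ∈ s, f b := Finset.sum_le_sum h1
  _ = (∑ b ∈ s, f b)^2 := by rw [← Finset.sum_mul, sq]

lemma prod_eq_of_le_ge {n : ℕ} (f : Fin n → ℝ) (m : ℝ) (hm : 0 < m) (hf : ∀ i, 0 < f i)
    (hle : ∀ i, f i ≤ m) (hprod : m ^ n ≤ ∏ i, f i) : ∀ i, f i = m := by
  intro i
  have hn0 : 0 < n := i.pos
  refine le_antisymm (hle i) ?_
  have h1 : ∏ i' ∈ Finset.univ.erase i, f i' ≤ m ^ (n-1) := by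
    calc ∏ i' ∈ Finset.univ.erase i, f i'
        ≤ ∏ _i' ∈ Finset.univ.erase i, m :=
          Finset.prod_le_prod (fun i' _ => (hf i').le) (fun i' _ => hle i')
      _ = m ^ (n-1) := by
          rw [Finset.prod_const, Finset.card_erase_of_mem (Finset.mem_univ i),
            Finset.card_univ, Fintype.card_fin]
  have h2 : m ^ n ≤ f i * m ^ (n - 1) := by
    refine le_trans hprod ?_
    rw [← Finset.mul_prod_erase _ f (Finset.mem_univ i)]
    exact mul_le_mul_of_nonneg_left h1 (hf i).le
  have h3 : m ^ n = m * m ^ (n-1) := by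
    conv_lhs => rw [show n = (n-1)+1 by omega]
    rw [pow_succ]; ring
  nlinarith [pow_pos hm (n-1)]

lemma prod_eq_of_ge_le {n : ℕ} (f : Fin n → ℝ) (m : ℝ) (hm : 0 < m)
    (hge : ∀ i, m ≤ f i) (hprod : ∏ i, f i ≤ m ^ n) : ∀ i, f i = m := by
  intro i
  have hn0 : 0 < n := i.pos
  refine le_antisymm ?_ (hge i)
  have h1 : m ^ (n-1) ≤ ∏ i' ∈ Finset.univ.erase i, f i' := by
    calc (m:ℝ) ^ (n-1) = ∏ _i' ∈ Finset.univ.erase i, m := by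
          rw [Finset.prod_const, Finset.card_erase_of_mem (Finset.mem_univ i),
            Finset.card_univ, Fintype.card_fin]
      _ ≤ ∏ i' ∈ Finset.univ.erase i, f i' :=
          Finset.prod_le_prod (fun i' _ => hm.le) (fun i' _ => hge i')
  have h2 : f i * m ^ (n - 1) ≤ m ^ n := by
    refine le_trans ?_ hprod
    rw [← Finset.mul_prod_erase _ f (Finset.mem_univ i)]
    exact mul_le_mul_of_nonneg_left h1 (lt_of_lt_of_le hm (hge i)).le
  have h3 : m ^ n = m * m ^ (n-1) := by
    conv_rhs => rw [← pow_succ']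
    congr 1
    omega
  nlinarith [pow_pos hm (n-1)]


lemma formD_nonneg (hμ : ∀ i, IsDist (μ i)) (j : Fin n) (s : X) : 0 ≤ formD μ α j s := by
  apply Finset.sum_nonneg
  intro t _
  split
  · exact Finset.prod_nonneg fun i' _ => (hμ i').1 _
  · exact le_rfl

lemma Q_pos (hμ : ∀ i, IsDist (μ i)) (i : Fin n) : 0 < ∑ x, (μ i x)^2 := by
  obtain ⟨x₀, hx₀⟩ : ∃ x, 0 < μ i x := by
    by_contra h
    push_neg at h
    have : ∑ x, μ i x ≤ 0 := Finset.sum_nonpos fun x _ => h x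
    rw [(hμ i).2] at this
    linarith
  have h1 : (μ i x₀)^2 ≤ ∑ x, (μ i x)^2 :=
    Finset.single_le_sum (fun x _ => sq_nonneg (μ i x)) (Finset.mem_univ x₀)
  nlinarith

lemma defect_nonneg (hμ : ∀ i, IsDist (μ i)) (i j : Fin n) :
    0 ≤ ∑ s, ∑ b, ∑ b', restD μ α i j b * restD μ α i j b'
            * (μ i ((α i j).symm (s-b)) - μ i ((α i j).symm (s-b')))^2 := by
  apply Finset.sum_nonneg; intro s _
  apply Finset.sum_nonneg; intro b _
  apply Finset.sum_nonneg; intro b' _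
  exact mul_nonneg (mul_nonneg (restD_nonneg hμ i j b) (restD_nonneg hμ i j b')) (sq_nonneg _)

lemma QL_le_Q (hμ : ∀ i, IsDist (μ i)) (i j : Fin n) :
    ∑ s, (formD μ α j s)^2 ≤ ∑ x, (μ i x)^2 := by
  have h := key_eq (μ := μ) (α := α) hμ i j
  have h2 := defect_nonneg (μ := μ) (α := α) hμ i j
  linarith

lemma chain (hμ : ∀ i, IsDist (μ i))
    (hind : ∀ x : Fin n → X,
      (∑ t : Fin n → X, if (∀ j, ∑ i, α i j (t i) = x j) then ∏ i, μ i (t i) else 0)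
        = ∏ j, formD μ α j (x j)) :
    ∏ i, (∑ x, (μ i x)^2) ≤ ∏ j, ∑ s, (formD μ α j s)^2 := by
  have e1 : ∏ j, ∑ s, (formD μ α j s)^2 = ∑ x : Fin n → X, ∏ j, (formD μ α j (x j))^2 :=
    Fintype.prod_sum (f := fun j s => (formD μ α j s)^2)
  have e3 : ∀ x : Fin n → X,
      (∑ t : Fin n → X, if (∀ j, ∑ i, α i j (t i) = x j) then (∏ i, μ i (t i))^2 else 0)
      ≤ ∏ j, (formD μ α j (x j))^2 := by
    intro x
    rw [Finset.prod_pow, ← hind x]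
    have hnn : ∀ t ∈ Finset.univ, (0:ℝ) ≤ (fun t : Fin n → X =>
        if (∀ j, ∑ i, α i j (t i) = x j) then ∏ i, μ i (t i) else 0) t := by
      intro t _
      dsimp only
      split
      · exact Finset.prod_nonneg fun i' _ => (hμ i').1 _
      · exact le_rfl
    have := sum_sq_le_sq_sum Finset.univ _ hnn
    refine le_trans (le_of_eq ?_) this
    apply Finset.sum_congr rfl
    intro t _
    rw [apply_ite (fun r : ℝ => r^2)]
    norm_num
  have e4 : ∑ x : Fin n → X, ∑ t : Fin n → X,
      (if (∀ j, ∑ i, α i j (t i) = x j) then (∏ i, μ i (t i))^2 else 0)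
      = ∑ t : Fin n → X, (∏ i, μ i (t i))^2 := by
    rw [Finset.sum_comm]
    apply Finset.sum_congr rfl
    intro t _
    have hc : ∀ x : Fin n → X, (∀ j, ∑ i, α i j (t i) = x j)
        ↔ (x = fun j => ∑ i, α i j (t i)) := by
      intro x
      rw [funext_iff]
      exact ⟨fun h j => (h j).symm, fun h j => (h j).symm⟩
    rw [Finset.sum_congr rfl fun x _ => if_congr (hc x) rfl rfl, Finset.sum_ite_eq']
    simp
  have e5 : ∑ t : Fin n → X, (∏ i, μ i (t i))^2 = ∏ i, ∑ x, (μ i x)^2 := by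
    rw [Fintype.prod_sum (f := fun i x => (μ i x)^2)]
    apply Finset.sum_congr rfl
    intro t _
    rw [← Finset.prod_pow]
  rw [e1, ← e5, ← e4]
  exact Finset.sum_le_sum fun x _ => e3 x

lemma all_eq (hμ : ∀ i, IsDist (μ i)) (hn : 0 < n)
    (hind : ∀ x : Fin n → X,
      (∑ t : Fin n → X, if (∀ j, ∑ i, α i j (t i) = x j) then ∏ i, μ i (t i) else 0)
        = ∏ j, formD μ α j (x j)) :
    ∀ i j : Fin n, ∑ s, (formD μ α j s)^2 = ∑ x, (μ i x)^2 := by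
  haveI : Nonempty (Fin n) := ⟨⟨0, hn⟩⟩
  obtain ⟨i₀, -, hmin⟩ := Finset.exists_min_image Finset.univ (fun i => ∑ x, (μ i x)^2)
    Finset.univ_nonempty
  set m := ∑ x, (μ i₀ x)^2 with hm
  have hmpos : 0 < m := Q_pos hμ i₀
  have hQLle : ∀ i j : Fin n, ∑ s, (formD μ α j s)^2 ≤ ∑ x, (μ i x)^2 :=
    fun i j => QL_le_Q hμ i j
  have hQLlem : ∀ j : Fin n, ∑ s, (formD μ α j s)^2 ≤ m := fun j => hQLle i₀ j
  have hmleQ : ∀ i : Fin n, m ≤ ∑ x, (μ i x)^2 := fun i => hmin i (Finset.mem_univ i)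
  -- products
  have hProd1 : ∏ i, (∑ x, (μ i x)^2) ≤ ∏ j, ∑ s, (formD μ α j s)^2 := chain hμ hind
  have hProd2 : ∏ j, (∑ s, (formD μ α j s)^2) ≤ ∏ (_j : Fin n), m :=
    Finset.prod_le_prod (fun j _ => Finset.sum_nonneg fun s _ => sq_nonneg _)
      (fun j _ => hQLlem j)
  have hProd3 : (∏ (_j : Fin n), m) ≤ ∏ i, (∑ x, (μ i x)^2) :=
    Finset.prod_le_prod (fun _ _ => hmpos.le) (fun i _ => hmleQ i)
  rw [Finset.prod_const, Finset.card_univ, Fintype.card_fin] at hProd2 hProd3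
  have hQeq : ∀ i, (∑ x, (μ i x)^2) = m :=
    prod_eq_of_ge_le _ m hmpos hmleQ (le_trans hProd1 hProd2)
  have hQLpos : ∀ j, 0 < ∑ s, (formD μ α j s)^2 := by
    intro j
    rcases lt_or_eq_of_le (Finset.sum_nonneg fun s (_ : s ∈ Finset.univ) =>
      sq_nonneg (formD μ α j s)) with h | h
    · exact h
    · exfalso
      have : ∏ j, (∑ s, (formD μ α j s)^2) = 0 := by
        apply Finset.prod_eq_zero (Finset.mem_univ j)
        exact h.symm
      have h0 : m ^ n ≤ 0 := le_trans hProd3 (le_trans hProd1 (le_of_eq this))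
      nlinarith [pow_pos hmpos n]
  have hQLeq : ∀ j, (∑ s, (formD μ α j s)^2) = m :=
    prod_eq_of_le_ge _ m hmpos hQLpos hQLlem (le_trans hProd3 hProd1)
  intro i j
  rw [hQLeq j, hQeq i]


lemma exists_pos (hμ : ∀ i, IsDist (μ i)) (i : Fin n) : ∃ x, 0 < μ i x := by
  by_contra h
  push_neg at h
  have : ∑ x, μ i x ≤ 0 := Finset.sum_nonpos fun x _ => h x
  rw [(hμ i).2] at this
  linarith

lemma inv_of_eq (hμ : ∀ i, IsDist (μ i)) (i jj : Fin n)
    (hEq : ∑ s, (formD μ α jj s)^2 = ∑ x, (μ i x)^2) :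
    ∀ s b b', 0 < restD μ α i jj b → 0 < restD μ α i jj b' →
      μ i ((α i jj).symm (s - b)) = μ i ((α i jj).symm (s - b')) := by
  have hk := key_eq (μ := μ) (α := α) hμ i jj
  have hz : ∑ s, ∑ b, ∑ b', restD μ α i jj b * restD μ α i jj b'
      * (μ i ((α i jj).symm (s-b)) - μ i ((α i jj).symm (s-b')))^2 = 0 := by
    have hd := defect_nonneg (μ := μ) (α := α) hμ i jj
    linarith
  intro s b b' hb hb'
  have tnn : ∀ (s b b' : X), 0 ≤ restD μ α i jj b * restD μ α i jj b'
      * (μ i ((α i jj).symm (s-b)) - μ i ((α i jj).symm (s-b')))^2 := fun s b b' =>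
    mul_nonneg (mul_nonneg (restD_nonneg hμ i jj b) (restD_nonneg hμ i jj b')) (sq_nonneg _)
  have h1 := (Finset.sum_eq_zero_iff_of_nonneg (fun s _ =>
    Finset.sum_nonneg fun b _ => Finset.sum_nonneg fun b' _ => tnn s b b')).mp hz s
    (Finset.mem_univ s)
  have h2 := (Finset.sum_eq_zero_iff_of_nonneg (fun b _ =>
    Finset.sum_nonneg fun b' _ => tnn s b b')).mp h1 b (Finset.mem_univ b)
  have h3 := (Finset.sum_eq_zero_iff_of_nonneg (fun b' _ => tnn s b b')).mp h2 b'
    (Finset.mem_univ b')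
  rcases mul_eq_zero.mp h3 with h | h
  · exact absurd h (ne_of_gt (mul_pos hb hb'))
  · have := pow_eq_zero_iff (n := 2) (by norm_num) |>.mp h
    linarith [sub_eq_zero.mp this]

lemma inv_shift (hμ : ∀ i, IsDist (μ i)) (i jj : Fin n)
    (hEq : ∑ s, (formD μ α jj s)^2 = ∑ x, (μ i x)^2) :
    ∀ b b', 0 < restD μ α i jj b → 0 < restD μ α i jj b' →
      ∀ v, μ i ((α i jj).symm (v + (b - b'))) = μ i ((α i jj).symm v) := by
  intro b b' hb hb' v
  have h := inv_of_eq hμ i jj hEq (v + b) b b' hb hb'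
  have e1 : v + b - b = v := by abel
  have e2 : v + b - b' = v + (b - b') := by abel
  rw [e1, e2] at h
  exact h.symm

lemma restD_pos (hμ : ∀ i, IsDist (μ i)) (i jj : Fin n) (t : Fin n → X) (ht0 : t i = 0)
    (htpos : ∀ i', i' ≠ i → 0 < μ i' (t i')) :
    0 < restD μ α i jj (∑ i', if i' = i then 0 else α i' jj (t i')) := by
  unfold restD
  have hterm : (0:ℝ) < (if (∑ i', if i' = i then 0 else α i' jj (t i'))
        = (∑ i', if i' = i then 0 else α i' jj (t i')) then
      (∏ i', if i' = i then (if t i' = 0 then (1:ℝ) else 0) else μ i' (t i')) else 0) := by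
    rw [if_pos rfl]
    apply Finset.prod_pos
    intro i' _
    by_cases h : i' = i
    · subst h
      rw [if_pos rfl, if_pos ht0]
      norm_num
    · rw [if_neg h]
      exact htpos i' h
  refine lt_of_lt_of_le hterm (Finset.single_le_sum
    (f := fun t' : Fin n → X => if (∑ i', if i' = i then 0 else α i' jj (t' i'))
        = (∑ i', if i' = i then 0 else α i' jj (t i')) then
      (∏ i', if i' = i then (if t' i' = 0 then (1:ℝ) else 0) else μ i' (t' i')) else 0)
    (fun t' _ => ?_) (Finset.mem_univ t))
  try dsimp only
  split
  · apply Finset.prod_nonneg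
    intro i' _
    split
    · split <;> norm_num
    · exact (hμ i').1 _
  · exact le_rfl

lemma diff_inv (hμ : ∀ i, IsDist (μ i)) (i jj : Fin n)
    (hEq : ∑ s, (formD μ α jj s)^2 = ∑ x, (μ i x)^2)
    (k : Fin n) (hki : k ≠ i) (u u' : X)
    (hu : 0 < μ k ((α k jj).symm u)) (hu' : 0 < μ k ((α k jj).symm u')) :
    ∀ v, μ i ((α i jj).symm (v + (u - u'))) = μ i ((α i jj).symm v) := by
  choose w hwpos using exists_pos hμ
  set t : Fin n → X := fun m => if m = i then 0 else if m = k then (α k jj).symm u else w m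
    with htdef
  set t' : Fin n → X := fun m => if m = i then 0 else if m = k then (α k jj).symm u' else w m
    with ht'def
  have ht0 : t i = 0 := by simp [htdef]
  have ht'0 : t' i = 0 := by simp [ht'def]
  have htpos : ∀ m, m ≠ i → 0 < μ m (t m) := by
    intro m hm
    by_cases hmk : m = k
    · subst hmk
      simp only [htdef, if_neg hm, if_pos rfl]
      exact hu
    · simp only [htdef, if_neg hm, if_neg hmk]
      exact hwpos m
  have ht'pos : ∀ m, m ≠ i → 0 < μ m (t' m) := by
    intro m hm
    by_cases hmk : m = k
    · subst hmk
      simp only [ht'def, if_neg hm, if_pos rfl]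
      exact hu'
    · simp only [ht'def, if_neg hm, if_neg hmk]
      exact hwpos m
  have hb := restD_pos (α := α) hμ i jj t ht0 htpos
  have hb' := restD_pos (α := α) hμ i jj t' ht'0 ht'pos
  have hdiff : (∑ i', if i' = i then 0 else α i' jj (t i'))
      - (∑ i', if i' = i then 0 else α i' jj (t' i')) = u - u' := by
    rw [← Finset.sum_sub_distrib]
    have hpt : ∀ m, ((if m = i then 0 else α m jj (t m)) - (if m = i then 0 else α m jj (t' m)))
        = if m = k then u - u' else 0 := by
      intro m
      by_cases hmi : m = i
      · rw [if_pos hmi, if_pos hmi, if_neg (by rw [hmi]; exact (Ne.symm hki : i ≠ k))]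
        abel
      · by_cases hmk : m = k
        · subst hmk
          rw [if_neg hmi, if_neg hmi, if_pos rfl]
          simp [htdef, ht'def, hmi]
        · rw [if_neg hmi, if_neg hmi, if_neg hmk]
          simp only [htdef, ht'def, if_neg hmi, if_neg hmk]
          abel
    rw [Finset.sum_congr rfl fun m _ => hpt m, Finset.sum_ite_eq']
    simp
  intro v
  have h := inv_shift hμ i jj hEq _ _ hb hb' v
  rw [hdiff] at h
  exact h


def invSub (f : X → ℝ) : AddSubgroup X where
  carrier := {d | ∀ v, f (v + d) = f v}
  zero_mem' := by
    intro v
    rw [add_zero]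
  add_mem' := by
    intro a b ha hb v
    rw [← add_assoc, hb (v + a), ha v]
  neg_mem' := by
    intro a ha v
    have h := ha (v + -a)
    rw [show v + -a + a = v by abel] at h
    exact h.symm

lemma mem_invSub {f : X → ℝ} {d : X} : d ∈ invSub f ↔ ∀ v, f (v + d) = f v := Iff.rfl

end Stmt11Aux

/-- Theorem 1, the main theorem: if the `n` linear forms
`L_j = ∑_i α_{ij} ξ_i` with `α_{ij} ∈ Aut(X)` of independent random variables
`ξ_1, …, ξ_n` are independent, then each `μ_i` is idempotent:
`μ_i = m_{K_i} * E_{x_i}`. -/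
theorem stmt11 {X : Type*} [AddCommGroup X] [Fintype X] [DecidableEq X]
    (n : ℕ) (hn : 2 ≤ n)
    (μ : Fin n → X → ℝ) (hμ : ∀ i, IsDist (μ i))
    (α : Fin n → Fin n → (X ≃+ X))
    (hindep : FormsIndep μ (fun i j => ⇑(α i j))) :
    ∀ i, ∃ (K : AddSubgroup X) (x₀ : X),
      μ i = convDist (haarDist K) (diracDist x₀) := by
  classical
  intro i
  have hn0 : 0 < n := by omega
  set jj : Fin n := ⟨0, hn0⟩ with hjj
  have hind : ∀ x : Fin n → X,
      (∑ t : Fin n → X, if (∀ j, ∑ i, α i j (t i) = x j) then ∏ i, μ i (t i) else 0)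
        = ∏ j, Stmt11Aux.formD μ α j (x j) := fun x => hindep x
  have hall := Stmt11Aux.all_eq hμ hn0 hind
  obtain ⟨k, hk⟩ : ∃ k : Fin n, k ≠ i := by
    by_cases h : i = ⟨0, hn0⟩
    · refine ⟨⟨1, by omega⟩, ?_⟩
      rw [h]
      intro hh
      simp [Fin.ext_iff] at hh
    · exact ⟨⟨0, hn0⟩, fun hh => h hh.symm⟩
  set ν : Fin n → X → ℝ := fun m u => μ m ((α m jj).symm u) with hν
  have hdiffinv : ∀ (a b : Fin n), b ≠ a → ∀ u u', 0 < ν b u → 0 < ν b u' →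
      ∀ v, ν a (v + (u - u')) = ν a v := by
    intro a b hba u u' hu hu' v
    exact Stmt11Aux.diff_inv hμ a jj (hall a jj) b hba u u' hu hu' v
  set D : Fin n → Set X := fun m => {d | ∃ u u', 0 < ν m u ∧ 0 < ν m u' ∧ d = u - u'} with hD
  set G : Fin n → AddSubgroup X := fun m => AddSubgroup.closure (D m) with hG
  have hDle : ∀ a b : Fin n, b ≠ a → G b ≤ Stmt11Aux.invSub (ν a) := by
    intro a b hba
    refine (AddSubgroup.closure_le _).mpr ?_
    rintro d ⟨u, u', hu, hu', rfl⟩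
    exact fun v => hdiffinv a b hba u u' hu hu' v
  have hpos : ∀ m : Fin n, ∃ s, 0 < ν m s := by
    intro m
    obtain ⟨x₀, hx₀⟩ := Stmt11Aux.exists_pos hμ m
    refine ⟨α m jj x₀, ?_⟩
    rw [hν]
    simpa using hx₀
  have hsub : ∀ (a : Fin n) (H : AddSubgroup X), H ≤ Stmt11Aux.invSub (ν a) →
      (H : Set X) ⊆ D a := by
    intro a H hH g hg
    obtain ⟨s₀, hs₀⟩ := hpos a
    have h2 : ∀ v, ν a (v + g) = ν a v := hH hg
    refine ⟨s₀ + g, s₀, ?_, hs₀, by abel⟩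
    rw [h2 s₀]
    exact hs₀
  have hGinv : G i ≤ Stmt11Aux.invSub (ν i) := by
    have h1 : G i ≤ Stmt11Aux.invSub (ν k) := hDle k i (Ne.symm hk)
    have h2 : (G i : Set X) ⊆ D k := hsub k (G i) h1
    have h3 : D k ⊆ (G k : Set X) := AddSubgroup.subset_closure
    have h4 : G k ≤ Stmt11Aux.invSub (ν i) := hDle i k hk
    intro g hg
    exact h4 (h3 (h2 hg))
  have hinv : ∀ g ∈ G i, ∀ v, ν i (v + g) = ν i v := fun g hg => hGinv hg
  obtain ⟨s₀, hs₀⟩ := hpos i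
  have hzero : ∀ v, v - s₀ ∉ G i → ν i v = 0 := by
    intro v hv
    by_contra hnz
    have hvpos : 0 < ν i v := lt_of_le_of_ne (by rw [hν]; exact (hμ i).1 _) (Ne.symm hnz)
    exact hv (AddSubgroup.subset_closure ⟨v, s₀, hvpos, hs₀, rfl⟩)
  have hconst : ∀ v, v - s₀ ∈ G i → ν i v = ν i s₀ := by
    intro v hv
    have h := hinv _ hv s₀
    rw [show s₀ + (v - s₀) = v by abel] at h
    exact h
  have hsum1 : ∑ v, ν i v = 1 := by
    rw [hν]
    exact (Fintype.sum_bijective _ (α i jj).symm.bijective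
      (fun v => μ i ((α i jj).symm v)) (fun x => μ i x) (fun v => rfl)).trans (hμ i).2
  have hcard : (∑ v, ν i v) = ν i s₀ * (Nat.card (G i) : ℝ) := by
    have e1 : ∀ v, ν i v = if v - s₀ ∈ G i then ν i s₀ else 0 := by
      intro v
      split
      · exact hconst v ‹_›
      · exact hzero v ‹_›
    rw [Finset.sum_congr rfl fun v _ => e1 v]
    rw [Fintype.sum_bijective (fun v : X => v - s₀) (Equiv.subRight s₀).bijective _
      (fun w => if w ∈ G i then ν i s₀ else 0) (fun v => rfl)]
    rw [← Finset.sum_filter, Finset.sum_const, nsmul_eq_mul, mul_comm]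
    congr 1
    rw [Nat.card_eq_fintype_card, Fintype.card_subtype]
  have hcpos : 0 < (Nat.card (G i) : ℝ) := by
    have : 0 < Nat.card (G i) := Nat.card_pos
    exact_mod_cast this
  have hval : ν i s₀ = ((Nat.card (G i) : ℝ))⁻¹ := by
    have h1 : ν i s₀ * (Nat.card (G i) : ℝ) = 1 := by rw [← hcard]; exact hsum1
    field_simp at h1 ⊢
    linarith
  refine ⟨(G i).comap (α i jj).toAddMonoidHom, (α i jj).symm s₀, ?_⟩
  have hcardeq : Nat.card ((G i).comap (α i jj).toAddMonoidHom) = Nat.card (G i) := by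
    refine Nat.card_congr ⟨fun p => ⟨α i jj p.1, AddSubgroup.mem_comap.mp p.2⟩,
      fun g => ⟨(α i jj).symm g.1, ?_⟩, fun p => Subtype.ext (by simp), fun g => Subtype.ext (by simp)⟩
    rw [AddSubgroup.mem_comap]
    show α i jj ((α i jj).symm g.1) ∈ G i
    rw [AddEquiv.apply_symm_apply]
    exact g.2
  funext x
  have hR : convDist (haarDist ((G i).comap (α i jj).toAddMonoidHom))
      (diracDist ((α i jj).symm s₀)) x
      = if x - (α i jj).symm s₀ ∈ (G i).comap (α i jj).toAddMonoidHom then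
          ((Nat.card ((G i).comap (α i jj).toAddMonoidHom) : ℝ))⁻¹ else 0 := by
    unfold convDist diracDist haarDist
    have e : ∀ t : X, (((G i).comap (α i jj).toAddMonoidHom : AddSubgroup X) : Set X).indicator
          (fun _ => ((Nat.card ((G i).comap (α i jj).toAddMonoidHom) : ℝ))⁻¹) t
          * (if x - t = (α i jj).symm s₀ then (1:ℝ) else 0)
        = if t = x - (α i jj).symm s₀ then
            (((G i).comap (α i jj).toAddMonoidHom : AddSubgroup X) : Set X).indicator
              (fun _ => ((Nat.card ((G i).comap (α i jj).toAddMonoidHom) : ℝ))⁻¹) t else 0 := by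
      intro t
      by_cases h : x - t = (α i jj).symm s₀
      · rw [if_pos h, if_pos (by rw [← h]; abel), mul_one]
      · rw [if_neg h, if_neg (fun hh => h (by rw [hh]; abel)), mul_zero]
    rw [Finset.sum_congr rfl fun t _ => e t, Finset.sum_ite_eq']
    simp only [Finset.mem_univ, if_true]
    rw [Set.indicator_apply]
    simp only [SetLike.mem_coe]
  rw [hR, hcardeq]
  have hLv : μ i x = ν i (α i jj x) := by
    rw [hν]
    simp
  rw [hLv]
  have hcond : (x - (α i jj).symm s₀ ∈ (G i).comap (α i jj).toAddMonoidHom)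
      ↔ (α i jj x - s₀ ∈ G i) := by
    rw [AddSubgroup.mem_comap]
    have : (α i jj).toAddMonoidHom (x - (α i jj).symm s₀) = α i jj x - s₀ := by
      simp [map_sub]
    rw [this]
  by_cases h : α i jj x - s₀ ∈ G i
  · rw [if_pos (hcond.mpr h), hconst _ h, hval]
  · rw [if_neg (fun hh => h (hcond.mp hh)), hzero _ h]
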